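/- For a, b, M ∈ ℝ with M > 0, consider the branch of the hyperbola (x−a)(y−b) = M with x > a. There is a constant C such that: if a chord of this branch has length λ and √M ≥ C·λ, then the area of the region between the chord and the hyperbola is at most C·λ³/√M. -/
import Mathlib


open MeasureTheory

/-- The point on the chord of the hyperbola (x−a)(y−b) = M over [x₀, x₁] at abscissa x. -/
noncomputable def chordY (a b M x₀ x₁ x : ℝ) : ℝ :=
  (b + M / (x₀ - a)) + (x - x₀) * (((b + M / (x₁ - a)) - (b + M / (x₀ - a))) / (x₁ - x₀))

/-- The (Euclidean) length of the chord of the hyperbola (x−a)(y−b) = M joining the points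
with abscissas x₀ and x₁. -/
noncomputable def chordLen (a b M x₀ x₁ : ℝ) : ℝ :=
  Real.sqrt ((x₁ - x₀) ^ 2 + (M / (x₁ - a) - M / (x₀ - a)) ^ 2)

/-- The region between a chord of the branch {x > a} of the hyperbola (x−a)(y−b) = M
and the hyperbola. -/
def chordRegion (a b M x₀ x₁ : ℝ) : Set (ℝ × ℝ) :=
  {p : ℝ × ℝ | x₀ ≤ p.1 ∧ p.1 ≤ x₁ ∧ b + M / (p.1 - a) ≤ p.2 ∧ p.2 ≤ chordY a b M x₀ x₁ p.1}

/-- Pointwise bound on the vertical gap between the chord and the hyperbola. -/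
lemma gap_bound (a b M x₀ x₁ x : ℝ) (hM : 0 < M) (ha : a < x₀) (h01 : x₀ < x₁)
    (hx0 : x₀ ≤ x) (hx1 : x ≤ x₁) :
    chordY a b M x₀ x₁ x - (b + M / (x - a)) ≤ M * (x₁ - x₀) ^ 2 / (4 * (x₀ - a) ^ 3) := by
  have ht : 0 < x₀ - a := by linarith
  have hu : 0 < x - a := by linarith
  have ht1 : 0 < x₁ - a := by linarith
  have hδ : 0 < x₁ - x₀ := by linarith
  have hid : chordY a b M x₀ x₁ x - (b + M / (x - a))
      = M * ((x - x₀) * (x₁ - x)) / ((x₀ - a) * (x₁ - a) * (x - a)) := by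
    unfold chordY
    field_simp
    ring
  rw [hid, div_le_div_iff₀ (by positivity) (by positivity)]
  have h1 : 4 * ((x - x₀) * (x₁ - x)) ≤ (x₁ - x₀) ^ 2 := by
    nlinarith [sq_nonneg ((x - x₀) - (x₁ - x))]
  have h2 : (x₀ - a) ^ 3 ≤ (x₀ - a) * (x₁ - a) * (x - a) := by
    calc (x₀ - a) ^ 3 = (x₀ - a) * (x₀ - a) * (x₀ - a) := by ring
      _ ≤ (x₀ - a) * (x₁ - a) * (x - a) := by
          apply mul_le_mul (mul_le_mul_of_nonneg_left (by linarith) ht.le) (by linarith) ht.le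
          positivity
  have h3 := mul_le_mul h1 h2 (by positivity) (by positivity)
  nlinarith [mul_le_mul_of_nonneg_left h3 hM.le]

/-- The pure-arithmetic part. -/
lemma arith (t δ M A L : ℝ) (ht : 0 < t) (hδ : 0 < δ) (hM : 0 < M) (hA0 : 0 ≤ A)
    (hA : A ≤ M * δ ^ 2 / (4 * t ^ 3) * δ)
    (hLδ : δ ≤ L) (hLΔ : M / t - M / (t + δ) ≤ L)
    (hge : 2 * L ≤ Real.sqrt M) :
    A ≤ 2 * L ^ 3 / Real.sqrt M := by
  have hsM : 0 < Real.sqrt M := Real.sqrt_pos.2 hM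
  have hL0 : 0 < L := lt_of_lt_of_le hδ hLδ
  have ht1 : 0 < t + δ := by linarith
  have hΔdef : M / t - M / (t + δ) = M * δ / (t * (t + δ)) := by
    field_simp
    ring
  rw [hΔdef] at hLΔ
  have hΔ0 : 0 < M * δ / (t * (t + δ)) := by positivity
  have hM' : Real.sqrt M ^ 2 = M := Real.sq_sqrt hM.le
  -- small mesh compared with distance to the pole: δ ≤ t
  have hδt : δ ≤ t := by
    by_contra h
    push_neg at h
    have h2 : M / (2 * δ) < M * δ / (t * (t + δ)) := by
      rw [div_lt_div_iff₀ (by positivity) (by positivity)]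
      nlinarith [mul_pos hM (mul_pos (sub_pos.2 h) ht1), mul_pos hM (mul_pos (sub_pos.2 h) hδ)]
    have h4 : M < 2 * δ * L := by
      have := h2.trans_le hLΔ
      rw [div_lt_iff₀ (by positivity)] at this
      linarith
    nlinarith [hge, hL0, hLδ]
  -- the key inequality  M A² ≤ L⁶
  have hkey : M * A ^ 2 ≤ L ^ 6 := by
    have hA' : A ≤ M * δ ^ 3 / (4 * t ^ 3) := by
      calc A ≤ M * δ ^ 2 / (4 * t ^ 3) * δ := hA
        _ = M * δ ^ 3 / (4 * t ^ 3) := by ring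
    have hA2 : A ^ 2 ≤ (M * δ ^ 3 / (4 * t ^ 3)) ^ 2 := pow_le_pow_left₀ hA0 hA' 2
    have hdd : M * δ ^ 2 / (2 * t ^ 2) ≤ M * δ ^ 2 / (t * (t + δ)) := by
      apply div_le_div_of_nonneg_left (by positivity) (by positivity)
      nlinarith
    have hδΔL : M * δ ^ 2 / (t * (t + δ)) ≤ L ^ 2 := by
      calc M * δ ^ 2 / (t * (t + δ)) = δ * (M * δ / (t * (t + δ))) := by ring
        _ ≤ L * L := mul_le_mul hLδ hLΔ hΔ0.le hL0.le
        _ = L ^ 2 := by ring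
    have hc : (M * δ ^ 2 / (2 * t ^ 2)) ^ 3 ≤ (L ^ 2) ^ 3 :=
      pow_le_pow_left₀ (by positivity) (hdd.trans hδΔL) 3
    have hc2 : M * (M * δ ^ 3 / (4 * t ^ 3)) ^ 2 ≤ (M * δ ^ 2 / (2 * t ^ 2)) ^ 3 := by
      have e1 : M * (M * δ ^ 3 / (4 * t ^ 3)) ^ 2 = M ^ 3 * δ ^ 6 / (16 * t ^ 6) := by
        field_simp
        ring
      have e2 : (M * δ ^ 2 / (2 * t ^ 2)) ^ 3 = M ^ 3 * δ ^ 6 / (8 * t ^ 6) := by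
        field_simp
        ring
      rw [e1, e2]
      apply div_le_div_of_nonneg_left (by positivity) (by positivity)
      nlinarith [pow_pos ht 6]
    calc M * A ^ 2 ≤ M * (M * δ ^ 3 / (4 * t ^ 3)) ^ 2 :=
          mul_le_mul_of_nonneg_left hA2 hM.le
      _ ≤ (M * δ ^ 2 / (2 * t ^ 2)) ^ 3 := hc2
      _ ≤ (L ^ 2) ^ 3 := hc
      _ = L ^ 6 := by ring
  have h6 : A ^ 2 ≤ L ^ 6 / M := by
    rw [le_div_iff₀ hM]
    linarith
  have hfin : A ≤ L ^ 3 / Real.sqrt M := by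
    have h2 : Real.sqrt (A ^ 2) ≤ Real.sqrt (L ^ 6 / M) := Real.sqrt_le_sqrt h6
    have h3 : Real.sqrt (L ^ 6 / M) = L ^ 3 / Real.sqrt M := by
      rw [show L ^ 6 / M = (L ^ 3 / Real.sqrt M) ^ 2 by rw [div_pow, hM']; ring,
        Real.sqrt_sq (by positivity)]
    rw [Real.sqrt_sq hA0, h3] at h2
    exact h2
  calc A ≤ L ^ 3 / Real.sqrt M := hfin
    _ ≤ 2 * L ^ 3 / Real.sqrt M := by
        rw [mul_div_assoc]
        linarith [div_nonneg (pow_nonneg hL0.le 3) hsM.le]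

/-- Area between a hyperbola branch and a chord of length λ: there is a constant C such
that whenever √M ≥ C·λ, the area is at most C·λ³/√M. -/
theorem hyperbola_chord_area_bound :
    ∃ C : ℝ, 0 < C ∧ ∀ a b M x₀ x₁ : ℝ, 0 < M → a < x₀ → x₀ < x₁ →
      Real.sqrt M ≥ C * chordLen a b M x₀ x₁ →
      (volume (chordRegion a b M x₀ x₁)).toReal
        ≤ C * (chordLen a b M x₀ x₁) ^ 3 / Real.sqrt M := by
  refine ⟨2, two_pos, fun a b M x₀ x₁ hM ha h01 hge => ?_⟩
  have ht : 0 < x₀ - a := by linarith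
  have hδ : 0 < x₁ - x₀ := by linarith
  have ht1 : 0 < x₁ - a := by linarith
  set L := chordLen a b M x₀ x₁ with hLdef
  set K := M * (x₁ - x₀) ^ 2 / (4 * (x₀ - a) ^ 3) with hKdef
  have hK0 : 0 ≤ K := by positivity
  -- measurability
  have hmeas : MeasurableSet (chordRegion a b M x₀ x₁) := by
    have e : chordRegion a b M x₀ x₁ =
        {p : ℝ × ℝ | x₀ ≤ p.1} ∩ {p : ℝ × ℝ | p.1 ≤ x₁} ∩
        {p : ℝ × ℝ | b + M / (p.1 - a) ≤ p.2} ∩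
        {p : ℝ × ℝ | p.2 ≤ chordY a b M x₀ x₁ p.1} := by
      ext p
      simp only [chordRegion, Set.mem_setOf_eq, Set.mem_inter_iff]
      tauto
    rw [e]
    have h1 : Measurable fun p : ℝ × ℝ => b + M / (p.1 - a) := by
      apply measurable_const.add
      exact measurable_const.div (measurable_fst.sub measurable_const)
    have h2 : Measurable fun p : ℝ × ℝ => chordY a b M x₀ x₁ p.1 := by
      unfold chordY
      exact (measurable_const.add ((measurable_fst.sub measurable_const).mul measurable_const))
    exact (((measurableSet_le measurable_const measurable_fst).inter
      (measurableSet_le measurable_fst measurable_const)).inter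
      (measurableSet_le h1 measurable_snd)).inter
      (measurableSet_le measurable_snd h2)
  -- sections
  have hsec : ∀ x : ℝ, volume (Prod.mk x ⁻¹' chordRegion a b M x₀ x₁)
      ≤ (Set.Icc x₀ x₁).indicator (fun _ => ENNReal.ofReal K) x := by
    intro x
    by_cases hx : x ∈ Set.Icc x₀ x₁
    · rw [Set.indicator_of_mem hx]
      have hsub : Prod.mk x ⁻¹' chordRegion a b M x₀ x₁ ⊆
          Set.Icc (b + M / (x - a)) (chordY a b M x₀ x₁ x) :=
        fun y hy => ⟨hy.2.2.1, hy.2.2.2⟩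
      calc volume (Prod.mk x ⁻¹' chordRegion a b M x₀ x₁)
          ≤ volume (Set.Icc (b + M / (x - a)) (chordY a b M x₀ x₁ x)) := measure_mono hsub
        _ = ENNReal.ofReal (chordY a b M x₀ x₁ x - (b + M / (x - a))) := Real.volume_Icc
        _ ≤ ENNReal.ofReal K :=
            ENNReal.ofReal_le_ofReal (gap_bound a b M x₀ x₁ x hM ha h01 hx.1 hx.2)
    · rw [Set.indicator_of_notMem hx]
      have he : Prod.mk x ⁻¹' chordRegion a b M x₀ x₁ = ∅ := by
        ext y
        simp only [Set.mem_preimage, chordRegion, Set.mem_setOf_eq, Set.mem_empty_iff_false,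
          iff_false]
        rintro ⟨h1, h2, -⟩
        exact hx (Set.mem_Icc.2 ⟨h1, h2⟩)
      rw [he, measure_empty]
  -- the area bound
  have hvol : volume (chordRegion a b M x₀ x₁) ≤ ENNReal.ofReal (K * (x₁ - x₀)) := by
    calc volume (chordRegion a b M x₀ x₁)
        = ∫⁻ x, volume (Prod.mk x ⁻¹' chordRegion a b M x₀ x₁) := by
          rw [← Measure.prod_apply hmeas, ← Measure.volume_eq_prod]
      _ ≤ ∫⁻ x, (Set.Icc x₀ x₁).indicator (fun _ => ENNReal.ofReal K) x :=
          lintegral_mono hsec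
      _ = ENNReal.ofReal K * volume (Set.Icc x₀ x₁) :=
          lintegral_indicator_const measurableSet_Icc _
      _ = ENNReal.ofReal K * ENNReal.ofReal (x₁ - x₀) := by rw [Real.volume_Icc]
      _ = ENNReal.ofReal (K * (x₁ - x₀)) := (ENNReal.ofReal_mul hK0).symm
  have hA : (volume (chordRegion a b M x₀ x₁)).toReal ≤ K * (x₁ - x₀) :=
    ENNReal.toReal_le_of_le_ofReal (by positivity) hvol
  -- facts about the chord length
  have hL2 : L = Real.sqrt ((x₁ - x₀) ^ 2 + (M / (x₀ - a) - M / (x₁ - a)) ^ 2) := by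
    rw [hLdef, chordLen]
    congr 1
    ring
  have hΔ0 : 0 ≤ M / (x₀ - a) - M / (x₁ - a) := by
    have : M / (x₁ - a) ≤ M / (x₀ - a) :=
      div_le_div_of_nonneg_left hM.le ht (by linarith)
    linarith
  have hLδ : x₁ - x₀ ≤ L := by
    rw [hL2]
    calc x₁ - x₀ = Real.sqrt ((x₁ - x₀) ^ 2) := (Real.sqrt_sq hδ.le).symm
      _ ≤ _ := Real.sqrt_le_sqrt (by nlinarith [sq_nonneg (M / (x₀ - a) - M / (x₁ - a))])
  have hLΔ : M / (x₀ - a) - M / (x₁ - a) ≤ L := by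
    rw [hL2]
    calc M / (x₀ - a) - M / (x₁ - a)
        = Real.sqrt ((M / (x₀ - a) - M / (x₁ - a)) ^ 2) := (Real.sqrt_sq hΔ0).symm
      _ ≤ _ := Real.sqrt_le_sqrt (by nlinarith [sq_nonneg (x₁ - x₀)])
  -- conclude by the arithmetic lemma
  have harith := arith (x₀ - a) (x₁ - x₀) M ((volume (chordRegion a b M x₀ x₁)).toReal) L
    ht hδ hM ENNReal.toReal_nonneg (by rw [hKdef] at hA; exact hA) hLδ ?_ hge
  · exact harith
  · have e : x₀ - a + (x₁ - x₀) = x₁ - a := by ring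
    rw [e]
    exact hLΔ
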